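/- The full automorphism group of the Archdeacon embedding Π_{m,n} has cardinality equal to the binomial coefficient C(2mn+1, 2) = (2mn+1)·mn; that is, the set of all bijections σ : F → F that are automorphisms of Π_{m,n} (orientation-preserving or orientation-reversing) has exactly (2mn+1)·mn elements. -/

import Mathlib

/-- The full automorphism group of the Archdeacon embedding `Π_{m,n}` has
cardinality `C(2mn+1, 2) = (2mn+1)·mn`: the set of all bijections `σ : F → F` that are
automorphisms of `Π_{m,n}` (orientation-preserving or orientation-reversing) has exactly
`(2mn+1)·mn` elements. -/
theorem archdeacon_full_automorphism_group_card
    (m n : ℕ) (hm : 3 ≤ m) (hn : 3 ≤ n) (hmo : Odd m) (hno : Odd n)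
    (hcop : Nat.Coprime m n)
    (F : Type*) [Field F] [Fintype F] (hcard : Fintype.card F = 2 * m * n + 1)
    (ε ξ : F) (hε : orderOf ε = m) (hξ : orderOf ξ = n)
    (H : Set F) (hH : ∀ x : F, x ∈ H ↔ ∃ i < m, ∃ j < n, x = ε ^ i * ξ ^ j)
    (ρ₀ : Equiv.Perm F)
    (hρ : ∀ a : F, (a ∈ H → ρ₀ a = -(ξ * a)) ∧ (a ∉ H → ρ₀ a = -(ε * a))) :
    {σ : F → F | Function.Bijective σ ∧
      ((∀ x y : F, x ≠ y → σ (x + ρ₀ (y - x)) = σ x + ρ₀ (σ y - σ x)) ∨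
       (∀ x y : F, x ≠ y → σ (x + ρ₀ (y - x)) = σ x + ρ₀⁻¹ (σ y - σ x)))}.ncard
      = (2 * m * n + 1) * (m * n) := by
  
  classical
  have hmn9 : 9 ≤ m * n := le_trans (by norm_num) (Nat.mul_le_mul hm hn)
  have hε0 : ε ≠ 0 := by
    intro h
    have h1 := pow_orderOf_eq_one ε
    rw [hε, h, zero_pow (by omega)] at h1
    exact zero_ne_one h1
  have hξ0 : ξ ≠ 0 := by
    intro h
    have h1 := pow_orderOf_eq_one ξ
    rw [hξ, h, zero_pow (by omega)] at h1
    exact zero_ne_one h1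
  have hεm : ε ^ m = 1 := by rw [← hε]; exact pow_orderOf_eq_one ε
  have hξn : ξ ^ n = 1 := by rw [← hξ]; exact pow_orderOf_eq_one ξ
  have hord : orderOf (ε * ξ) = m * n := by
    rw [← hε, ← hξ]
    exact (Commute.all ε ξ).orderOf_mul_eq_mul_orderOf_of_coprime (by rw [hε, hξ]; exact hcop)
  have hεξ0 : ε * ξ ≠ 0 := mul_ne_zero hε0 hξ0
  have hεξmn : (ε * ξ) ^ (m * n) = 1 := by rw [← hord]; exact pow_orderOf_eq_one _
  -- characteristic ≠ 2
  have hchar2 : (-1 : F) ≠ 1 := by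
    intro h
    have h2 : (2 : F) = 0 := by linear_combination -h
    have h3 : ringChar F ∣ 2 := (CharP.cast_eq_zero_iff F (ringChar F) 2).mp (by exact_mod_cast h2)
    rcases (Nat.dvd_prime Nat.prime_two).mp h3 with h4 | h4
    · have := (CharP.cast_eq_zero_iff F (ringChar F) 1).mpr (by rw [h4])
      rw [Nat.cast_one] at this; exact one_ne_zero this
    · have hodd := FiniteField.even_card_iff_char_two.mp h4
      rw [hcard, mul_assoc] at hodd
      omega
  -- powers mod
  have hpm : ∀ (a : F) (N i : ℕ), a ^ N = 1 → a ^ i = a ^ (i % N) := by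
    intro a N i h1
    conv_lhs => rw [← Nat.div_add_mod i N]
    rw [pow_add, pow_mul, h1, one_pow, one_mul]
  have hHpow : ∀ z : F, z ∈ H ↔ ∃ i, z = (ε * ξ) ^ i := by
    intro z
    constructor
    · intro hz
      obtain ⟨i, hi, j, hj, rfl⟩ := (hH _).mp hz
      obtain ⟨k, hk1, hk2⟩ := Nat.chineseRemainder hcop i j
      refine ⟨k, ?_⟩
      rw [mul_pow, hpm ε m k hεm, hpm ξ n k hξn, hk1, hk2,
        Nat.mod_eq_of_lt hi, Nat.mod_eq_of_lt hj]
    · rintro ⟨i, rfl⟩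
      rw [mul_pow]
      exact (hH _).mpr ⟨i % m, Nat.mod_lt _ (by omega), i % n, Nat.mod_lt _ (by omega),
        by rw [← hpm ε m i hεm, ← hpm ξ n i hξn]⟩
  have H1 : (1 : F) ∈ H := (hHpow 1).mpr ⟨0, (pow_zero _).symm⟩
  have Hε : ε ∈ H := (hH _).mpr ⟨1, by omega, 0, by omega, by ring⟩
  have Hξ : ξ ∈ H := (hH _).mpr ⟨0, by omega, 1, by omega, by ring⟩
  have Hmul : ∀ a ∈ H, ∀ b ∈ H, a * b ∈ H := by
    intro a ha b hb
    obtain ⟨i, rfl⟩ := (hHpow a).mp ha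
    obtain ⟨j, rfl⟩ := (hHpow b).mp hb
    exact (hHpow _).mpr ⟨i + j, (pow_add _ _ _).symm⟩
  have Hne0 : ∀ a ∈ H, a ≠ 0 := by
    intro a ha
    obtain ⟨i, rfl⟩ := (hHpow a).mp ha
    exact pow_ne_zero _ hεξ0
  have H0 : (0 : F) ∉ H := fun h => Hne0 0 h rfl
  have Hinv : ∀ a ∈ H, a⁻¹ ∈ H := by
    intro a ha
    obtain ⟨i, rfl⟩ := (hHpow a).mp ha
    have key : (ε * ξ) ^ i * (ε * ξ) ^ (i * (m * n - 1)) = 1 := by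
      rw [← pow_add]
      have he : i + i * (m * n - 1) = (m * n) * i := by
        have h1 : m * n - 1 + 1 = m * n := by omega
        calc i + i * (m * n - 1) = i * ((m * n - 1) + 1) := by ring
          _ = (m * n) * i := by rw [h1]; ring
      rw [he, pow_mul, hεξmn, one_pow]
    exact (hHpow _).mpr ⟨i * (m * n - 1), inv_eq_of_mul_eq_one_right key⟩
  have Hneg1 : (-1 : F) ∉ H := by
    intro h
    obtain ⟨i, hi⟩ := (hHpow _).mp h
    have h1 : ((-1 : F)) ^ (m * n) = 1 := by
      rw [hi, ← pow_mul, mul_comm i, pow_mul, hεξmn, one_pow]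
    rw [Odd.neg_one_pow (hmo.mul hno)] at h1
    exact hchar2 h1
  have HnegH : ∀ a ∈ H, -a ∉ H := by
    intro a ha h
    apply Hneg1
    have : (-1 : F) = (-a) * a⁻¹ := by
      rw [neg_mul, mul_inv_cancel₀ (Hne0 a ha)]
    rw [this]
    exact Hmul _ h _ (Hinv _ ha)
  -- injectivity of powers of ε*ξ below m*n
  have hinj : ∀ i < m * n, ∀ j < m * n, (ε * ξ) ^ i = (ε * ξ) ^ j → i = j := by
    intro i hi j hj hij
    exact pow_injOn_Iio_orderOf (by rwa [Set.mem_Iio, hord]) (by rwa [Set.mem_Iio, hord]) hij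
  -- the two cosets cover F \ {0}
  have cover : ∀ z : F, z ≠ 0 → ∃ i, z = (ε * ξ) ^ i ∨ z = -ξ * (ε * ξ) ^ i := by
    intro z hz
    set A : Finset F := (Finset.range (m * n)).image fun i => (ε * ξ) ^ i with hA
    set B : Finset F := (Finset.range (m * n)).image fun i => -ξ * (ε * ξ) ^ i with hB
    have hAcard : A.card = m * n := by
      rw [hA, Finset.card_image_of_injOn, Finset.card_range]
      intro i hi j hj hij
      exact hinj i (Finset.mem_range.mp hi) j (Finset.mem_range.mp hj) hij
    have hBcard : B.card = m * n := by
      rw [hB, Finset.card_image_of_injOn, Finset.card_range]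
      intro i hi j hj hij
      have : (ε * ξ) ^ i = (ε * ξ) ^ j :=
        mul_left_cancel₀ (neg_ne_zero.mpr hξ0) hij
      exact hinj i (Finset.mem_range.mp hi) j (Finset.mem_range.mp hj) this
    have hdisj : Disjoint A B := by
      rw [Finset.disjoint_left]
      rintro a haA haB
      rw [hA, Finset.mem_image] at haA
      rw [hB, Finset.mem_image] at haB
      obtain ⟨i, -, hi⟩ := haA
      obtain ⟨j, -, hj⟩ := haB
      apply Hneg1
      have hji : (-1 : F) = (ε * ξ) ^ i * ((ε * ξ) ^ j)⁻¹ * ξ⁻¹ := by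
        have hne : (ε * ξ) ^ j ≠ 0 := pow_ne_zero _ hεξ0
        field_simp
        linear_combination - hi + hj
      rw [hji]
      exact Hmul _ (Hmul _ ((hHpow _).mpr ⟨i, rfl⟩) _ (Hinv _ ((hHpow _).mpr ⟨j, rfl⟩))) _
        (Hinv _ Hξ)
    have hsub : A ∪ B ⊆ Finset.univ.erase 0 := by
      intro a ha
      rw [Finset.mem_union] at ha
      rw [Finset.mem_erase]
      refine ⟨?_, Finset.mem_univ _⟩
      rcases ha with ha | ha
      · rw [hA, Finset.mem_image] at ha
        obtain ⟨i, -, rfl⟩ := ha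
        exact pow_ne_zero _ hεξ0
      · rw [hB, Finset.mem_image] at ha
        obtain ⟨i, -, rfl⟩ := ha
        exact mul_ne_zero (neg_ne_zero.mpr hξ0) (pow_ne_zero _ hεξ0)
    have hcard' : (Finset.univ.erase (0 : F)).card = 2 * m * n := by
      rw [Finset.card_erase_of_mem (Finset.mem_univ _), Finset.card_univ, hcard]
      omega
    have hunion : A ∪ B = Finset.univ.erase 0 := by
      apply Finset.eq_of_subset_of_card_le hsub
      rw [hcard', Finset.card_union_of_disjoint hdisj, hAcard, hBcard]
      ring_nf
      omega
    have hzmem : z ∈ A ∪ B := by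
      rw [hunion, Finset.mem_erase]
      exact ⟨hz, Finset.mem_univ _⟩
    rw [Finset.mem_union] at hzmem
    rcases hzmem with h | h
    · rw [hA, Finset.mem_image] at h
      obtain ⟨i, -, hi⟩ := h
      exact ⟨i, Or.inl hi.symm⟩
    · rw [hB, Finset.mem_image] at h
      obtain ⟨i, -, hi⟩ := h
      exact ⟨i, Or.inr hi.symm⟩
  have HcomplH : ∀ z : F, z ≠ 0 → z ∉ H → ∃ h ∈ H, z = -ξ * h := by
    intro z hz hzH
    obtain ⟨i, hi | hi⟩ := cover z hz
    · exact absurd ((hHpow _).mpr ⟨i, hi⟩) hzH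
    · exact ⟨(ε * ξ) ^ i, (hHpow _).mpr ⟨i, rfl⟩, hi⟩
  have Hneg_of_not : ∀ z : F, z ≠ 0 → z ∉ H → -z ∈ H := by
    intro z hz hzH
    obtain ⟨h, hh, rfl⟩ := HcomplH z hz hzH
    have : -(-ξ * h) = ξ * h := by ring
    rw [this]
    exact Hmul _ Hξ _ hh
  have Hnotmul : ∀ u ∈ H, ∀ z : F, z ∉ H → u * z ∉ H := by
    intro u hu z hz h
    apply hz
    have : z = u⁻¹ * (u * z) := by
      field_simp [Hne0 u hu]
    rw [this]
    exact Hmul _ (Hinv _ hu) _ h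
  -- ρ₀ basics
  have rho0 : ρ₀ 0 = 0 := by
    rw [(hρ 0).2 H0, mul_zero, neg_zero]
  have rho_ne0 : ∀ z : F, z ≠ 0 → ρ₀ z ≠ 0 := by
    intro z hz h
    exact hz (ρ₀.injective (h.trans rho0.symm))
  have rho_scale : ∀ u ∈ H, ∀ z : F, ρ₀ (u * z) = u * ρ₀ z := by
    intro u hu z
    by_cases hz : z ∈ H
    · rw [(hρ _).1 (Hmul _ hu _ hz), (hρ _).1 hz]; ring
    · rw [(hρ _).2 (Hnotmul u hu z hz), (hρ _).2 hz]; ring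
  have rho_sq : ∀ z : F, ρ₀ (ρ₀ z) = ε * ξ * z := by
    intro z
    by_cases hz : z ∈ H
    · rw [(hρ z).1 hz, (hρ _).2 (by
        have : -(ξ * z) = -(ξ * z) := rfl
        have hmem : ξ * z ∈ H := Hmul _ Hξ _ hz
        exact HnegH _ hmem)]
      ring
    · by_cases hz0 : z = 0
      · subst hz0; rw [rho0, rho0]; ring
      · have hmem : ε * z ∉ H := Hnotmul ε Hε z hz
        have hne : ε * z ≠ 0 := mul_ne_zero hε0 hz0
        have hmem2 : -(ε * z) ∈ H := Hneg_of_not _ hne hmem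
        rw [(hρ z).2 hz, (hρ _).1 hmem2]
        ring
  -- iterates
  have iter_scale : ∀ u ∈ H, ∀ (j : ℕ) (z : F), (⇑ρ₀)^[j] (u * z) = u * (⇑ρ₀)^[j] z := by
    intro u hu j
    induction j with
    | zero => intro z; simp
    | succ k ih =>
      intro z
      rw [Function.iterate_succ_apply', Function.iterate_succ_apply', ih, rho_scale u hu]
  have iter2 : ∀ (i : ℕ) (z : F), (⇑ρ₀)^[2 * i] z = (ε * ξ) ^ i * z := by
    intro i
    induction i with
    | zero => intro z; simp
    | succ k ih =>
      intro z
      have h2 : 2 * (k + 1) = 2 * k + 1 + 1 := by ring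
      rw [h2, Function.iterate_succ_apply', Function.iterate_succ_apply', ih, rho_sq]
      ring
  have iter_ne0 : ∀ (j : ℕ) (z : F), z ≠ 0 → (⇑ρ₀)^[j] z ≠ 0 := by
    intro j
    induction j with
    | zero => intro z hz; simpa using hz
    | succ k ih =>
      intro z hz
      rw [Function.iterate_succ_apply']
      exact rho_ne0 _ (ih z hz)
  have cover_iter : ∀ z : F, z ≠ 0 → ∃ j : ℕ, z = (⇑ρ₀)^[j] 1 := by
    intro z hz
    obtain ⟨i, hi | hi⟩ := cover z hz
    · exact ⟨2 * i, by rw [iter2, mul_one, hi]⟩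
    · refine ⟨2 * i + 1, ?_⟩
      rw [Function.iterate_succ_apply, iter2, (hρ 1).1 H1, hi]
      ring
  -- the pair lemma
  have pair : ∃ x ∈ H, ∃ y ∈ H, y - x ∈ H := by
    by_contra hcon
    push_neg at hcon
    have step : ∀ s ∈ H, s ≠ 1 → 1 - s ∈ H := by
      intro s hs hs1
      have h1 : s - 1 ∉ H := hcon 1 H1 s hs
      have h2 : s - 1 ≠ 0 := sub_ne_zero.mpr hs1
      have := Hneg_of_not _ h2 h1
      rwa [neg_sub] at this
    have hsH : ε * ξ ∈ H := (hHpow _).mpr ⟨1, (pow_one _).symm⟩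
    have hs1 : ε * ξ ≠ 1 := by
      intro h
      have := orderOf_eq_one_iff.mpr h
      omega
    have hs2H : ε * ξ * (ε * ξ) ∈ H := Hmul _ hsH _ hsH
    have hs21 : ε * ξ * (ε * ξ) ≠ 1 := by
      intro h
      have hdvd : orderOf (ε * ξ) ∣ 2 := orderOf_dvd_of_pow_eq_one (by rw [pow_two]; exact h)
      rw [hord] at hdvd
      have := Nat.le_of_dvd (by norm_num) hdvd
      omega
    have ha : 1 - ε * ξ ∈ H := step _ hsH hs1
    have hb : 1 - ε * ξ * (ε * ξ) ∈ H := step _ hs2H hs21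
    have hane : (1 : F) - ε * ξ ≠ 0 := Hne0 _ ha
    have h1s : 1 + ε * ξ ∈ H := by
      have heq : 1 + ε * ξ = (1 - ε * ξ * (ε * ξ)) * (1 - ε * ξ)⁻¹ := by
        field_simp
        ring
      rw [heq]
      exact Hmul _ hb _ (Hinv _ ha)
    have := hcon (ε * ξ) hsH (1 + ε * ξ) h1s
    simp at this
    exact this H1
  have hεξne : ε ≠ ξ := by
    intro h
    rw [h] at hε
    rw [hε] at hξ
    rw [hξ] at hcop
    rw [Nat.Coprime, Nat.gcd_self] at hcop
    omega
  -- classification of orientation-preserving automorphisms fixing 0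
  have classOP : ∀ σ : F → F, Function.Bijective σ → σ 0 = 0 →
      (∀ x y : F, x ≠ y → σ (x + ρ₀ (y - x)) = σ x + ρ₀ (σ y - σ x)) →
      (∃ c ∈ H, ∀ z, σ z = c * z) ∨ (∃ c ∈ H, ∀ z, σ z = c * ρ₀ z) := by
    intro σ hbij h0 hop
    have comm : ∀ z : F, z ≠ 0 → σ (ρ₀ z) = ρ₀ (σ z) := by
      intro z hz
      have := hop 0 z (Ne.symm hz)
      simpa [h0] using this
    have itercomm : ∀ (j : ℕ) (z : F), z ≠ 0 → σ ((⇑ρ₀)^[j] z) = (⇑ρ₀)^[j] (σ z) := by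
      intro j
      induction j with
      | zero => intro z _; simp
      | succ k ih =>
        intro z hz
        rw [Function.iterate_succ_apply', Function.iterate_succ_apply',
          comm _ (iter_ne0 k z hz), ih z hz]
    have h1 : σ 1 ≠ 0 := by
      intro h
      exact one_ne_zero (hbij.1 (h.trans h0.symm))
    obtain ⟨k, hk⟩ := cover_iter (σ 1) h1
    rcases Nat.even_or_odd k with ⟨s, hs⟩ | ⟨s, hs⟩
    · left
      refine ⟨(ε * ξ) ^ s, (hHpow _).mpr ⟨s, rfl⟩, ?_⟩
      intro z
      by_cases hz : z = 0
      · rw [hz, h0, mul_zero]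
      obtain ⟨j, rfl⟩ := cover_iter z hz
      rw [itercomm j 1 one_ne_zero, hk, show k = 2 * s by omega, iter2,
        iter_scale _ ((hHpow _).mpr ⟨s, rfl⟩)]
    · right
      refine ⟨(ε * ξ) ^ s, (hHpow _).mpr ⟨s, rfl⟩, ?_⟩
      intro z
      by_cases hz : z = 0
      · rw [hz, h0, rho0, mul_zero]
      obtain ⟨j, rfl⟩ := cover_iter z hz
      have key : σ ((⇑ρ₀)^[j] 1) = (⇑ρ₀)^[j] ((⇑ρ₀)^[k] 1) := by
        rw [itercomm j 1 one_ne_zero, hk]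
      rw [← Function.iterate_add_apply, show j + k = 2 * s + (j + 1) by omega,
        Function.iterate_add_apply, iter2] at key
      rw [key, Function.iterate_succ_apply']
  -- the odd case is impossible
  have noodd : ∀ c ∈ H, ¬ (∀ x y : F, x ≠ y →
      c * ρ₀ (x + ρ₀ (y - x)) = c * ρ₀ x + ρ₀ (c * ρ₀ y - c * ρ₀ x)) := by
    intro c hc hop
    obtain ⟨x, hx, y, hy, hd⟩ := pair
    have hc0 : c ≠ 0 := Hne0 _ hc
    have hd0 : y - x ≠ 0 := Hne0 _ hd
    have hx0 : x ≠ 0 := Hne0 _ hx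
    have hxy : x ≠ y := by intro h; exact hd0 (by rw [h, sub_self])
    have hρd : ρ₀ (y - x) = -(ξ * (y - x)) := (hρ _).1 hd
    have hρx : ρ₀ x = -(ξ * x) := (hρ _).1 hx
    have hρy : ρ₀ y = -(ξ * y) := (hρ _).1 hy
    have hdiff : c * ρ₀ y - c * ρ₀ x = -(c * ξ * (y - x)) := by
      rw [hρx, hρy]; ring
    have hmem : c * ξ * (y - x) ∈ H := Hmul _ (Hmul _ hc _ Hξ) _ hd
    have hρdiff : ρ₀ (c * ρ₀ y - c * ρ₀ x) = ε * (c * ξ * (y - x)) := by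
      rw [hdiff, (hρ _).2 (HnegH _ hmem)]; ring
    have heq := hop x y hxy
    rw [hρdiff, hρd, hρx] at heq
    -- heq : c * ρ₀ (x + -(ξ * (y-x))) = c * -(ξ * x) + ε * (c * ξ * (y - x))
    have hwmain : c * ρ₀ (x - ξ * (y - x)) = c * ξ * (ε * (y - x) - x) := by
      rw [show x - ξ * (y - x) = x + -(ξ * (y - x)) by ring, heq]; ring
    have hcontra : ξ = ε := by
      by_cases hw : x - ξ * (y - x) ∈ H
      · rw [(hρ _).1 hw] at hwmain
        have : (ξ - ε) * (c * ξ * (y - x)) = 0 := by linear_combination hwmain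
        rcases mul_eq_zero.mp this with h | h
        · exact sub_eq_zero.mp h
        · exact absurd h (Hne0 _ hmem)
      · by_cases hw0 : x - ξ * (y - x) = 0
        · rw [hw0, rho0, mul_zero] at hwmain
          have hxv : x = ξ * (y - x) := by linear_combination hw0
          have : (ε - ξ) * (c * ξ * (y - x)) = 0 := by linear_combination -hwmain + c * ξ * hxv
          rcases mul_eq_zero.mp this with h | h
          · exact (sub_eq_zero.mp h).symm
          · exact absurd h (Hne0 _ hmem)
        · rw [(hρ _).2 hw] at hwmain
          have : (ξ - ε) * (c * x) = 0 := by linear_combination hwmain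
          rcases mul_eq_zero.mp this with h | h
          · exact sub_eq_zero.mp h
          · exact absurd h (mul_ne_zero hc0 hx0)
    exact hεξne hcontra.symm
  -- shape of orientation-reversing automorphisms, after translation
  have trans_shape : ∀ σ : F → F, Function.Bijective σ →
      (∀ x y : F, x ≠ y → σ (x + ρ₀ (y - x)) = σ x + ρ₀⁻¹ (σ y - σ x)) →
      ∀ v : F, ∃ γ₁ γ₂ : F, γ₁ ≠ 0 ∧ γ₂ ≠ 0 ∧
        ∀ z : F, z ≠ 0 → (σ (z + v) - σ v) * z = γ₁ ∨ (σ (z + v) - σ v) * z = γ₂ := by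
    intro σ hbij hor v
    set ψ : F → F := fun z => σ (z + v) - σ v with hψ
    have hψinj : ∀ z : F, z ≠ 0 → ψ z ≠ 0 := by
      intro z hz h
      rw [hψ] at h
      simp only [sub_eq_zero] at h
      exact hz (by have h2 := hbij.1 h; linear_combination h2)
    have hcomm : ∀ z : F, z ≠ 0 → ψ (ρ₀ z) = ρ₀⁻¹ (ψ z) := by
      intro z hz
      have hne : v ≠ z + v := by
        intro h; exact hz (by linear_combination -h)
      have := hor v (z + v) hne
      simp only [add_sub_cancel_right] at this
      rw [hψ]
      simp only []
      rw [add_comm (ρ₀ z) v, this]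
      ring
    have key2 : ∀ w : F, ρ₀⁻¹ (ρ₀⁻¹ w) = (ε * ξ)⁻¹ * w := by
      intro w
      have h1 : ρ₀ (ρ₀ ((ε * ξ)⁻¹ * w)) = w := by
        rw [rho_sq]
        field_simp
      calc ρ₀⁻¹ (ρ₀⁻¹ w) = ρ₀⁻¹ (ρ₀⁻¹ (ρ₀ (ρ₀ ((ε * ξ)⁻¹ * w)))) := by rw [h1]
        _ = (ε * ξ)⁻¹ * w := by rw [Equiv.Perm.inv_def, Equiv.symm_apply_apply, Equiv.symm_apply_apply]
    have hscale : ∀ z : F, z ≠ 0 → ψ (ε * ξ * z) = (ε * ξ)⁻¹ * ψ z := by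
      intro z hz
      have h1 := hcomm z hz
      have h2 := hcomm (ρ₀ z) (rho_ne0 z hz)
      rw [rho_sq, h1, key2] at h2
      exact h2
    have hpowinv : ∀ (i : ℕ) (z : F), z ≠ 0 →
        ψ ((ε * ξ) ^ i * z) * ((ε * ξ) ^ i * z) = ψ z * z := by
      intro i
      induction i with
      | zero => intro z hz; rw [pow_zero, one_mul]
      | succ k ih =>
        intro z hz
        have hne : (ε * ξ) ^ k * z ≠ 0 := mul_ne_zero (pow_ne_zero _ hεξ0) hz
        have h1 : (ε * ξ) ^ (k + 1) * z = ε * ξ * ((ε * ξ) ^ k * z) := by ring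
        rw [h1, hscale _ hne]
        have h2 : (ε * ξ)⁻¹ * ψ ((ε * ξ) ^ k * z) * (ε * ξ * ((ε * ξ) ^ k * z))
            = ψ ((ε * ξ) ^ k * z) * ((ε * ξ) ^ k * z) := by
          field_simp
        rw [h2, ih z hz]
    refine ⟨ψ 1 * 1, ψ (-ξ) * (-ξ), ?_, ?_, ?_⟩
    · exact mul_ne_zero (hψinj 1 one_ne_zero) one_ne_zero
    · exact mul_ne_zero (hψinj _ (neg_ne_zero.mpr hξ0)) (neg_ne_zero.mpr hξ0)
    · intro z hz
      by_cases hzH : z ∈ H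
      · left
        obtain ⟨i, rfl⟩ := (hHpow z).mp hzH
        have := hpowinv i 1 one_ne_zero
        rw [mul_one] at this
        rw [this]
      · right
        obtain ⟨h, hh, hzeq⟩ := HcomplH z hz hzH
        obtain ⟨i, rfl⟩ := (hHpow h).mp hh
        rw [show -ξ * (ε * ξ) ^ i = (ε * ξ) ^ i * (-ξ) by ring] at hzeq
        rw [hzeq]
        exact hpowinv i (-ξ) (neg_ne_zero.mpr hξ0)
  -- there are no orientation-reversing automorphisms
  have noOR : ∀ σ : F → F, Function.Bijective σ →
      (∀ x y : F, x ≠ y → σ (x + ρ₀ (y - x)) = σ x + ρ₀⁻¹ (σ y - σ x)) → False := by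
    intro σ hbij hor
    obtain ⟨γ₁, γ₂, hγ₁, hγ₂, hg⟩ := trans_shape σ hbij hor 0
    obtain ⟨δ₁, δ₂, hδ₁, hδ₂, hd'⟩ := trans_shape σ hbij hor 1
    set D : F := σ 1 - σ 0 with hD
    have hDne : D ≠ 0 := sub_ne_zero.mpr (fun h => one_ne_zero (hbij.1 h))
    set f : F → F × F := fun x => ((σ x - σ 0) * x, (σ x - σ 1) * (x - 1)) with hf
    set s : Finset F := (Finset.univ.erase (0 : F)).erase 1 with hs
    set K : Finset (F × F) := {γ₁, γ₂} ×ˢ {δ₁, δ₂} with hK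
    have hmaps : ∀ x ∈ s, f x ∈ K := by
      intro x hx
      rw [hs, Finset.mem_erase, Finset.mem_erase] at hx
      obtain ⟨hx1, hx0, -⟩ := hx
      rw [hK, Finset.mem_product]
      constructor
      · have := hg x hx0
        rw [add_zero] at this
        simp only [Finset.mem_insert, Finset.mem_singleton]
        exact this
      · have := hd' (x - 1) (sub_ne_zero.mpr hx1)
        rw [sub_add_cancel] at this
        simp only [Finset.mem_insert, Finset.mem_singleton]
        exact this
    have hscard : 8 < s.card := by
      rw [hs, Finset.card_erase_of_mem (by
          rw [Finset.mem_erase]; exact ⟨one_ne_zero, Finset.mem_univ _⟩),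
        Finset.card_erase_of_mem (Finset.mem_univ _), Finset.card_univ, hcard, mul_assoc]
      omega
    have hKcard : K.card ≤ 4 := by
      rw [hK]
      calc ({γ₁, γ₂} ×ˢ {δ₁, δ₂} : Finset (F × F)).card
          = ({γ₁, γ₂} : Finset F).card * ({δ₁, δ₂} : Finset F).card := Finset.card_product _ _
        _ ≤ 2 * 2 := Nat.mul_le_mul (Finset.card_insert_le _ _) (Finset.card_insert_le _ _)
        _ = 4 := by norm_num
    obtain ⟨p, hpK, hp⟩ := Finset.exists_lt_card_fiber_of_mul_lt_card_of_maps_to hmaps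
      (lt_of_le_of_lt (Nat.mul_le_mul_right 2 hKcard) hscard)
    set t : Finset F := s.filter (fun x => f x = p) with ht
    have hquad : ∀ x ∈ t, D * x ^ 2 + (p.2 - p.1 - D) * x + p.1 = 0 := by
      intro x hx
      rw [ht, Finset.mem_filter] at hx
      obtain ⟨-, hfx⟩ := hx
      have h1 : (σ x - σ 0) * x = p.1 := congrArg Prod.fst hfx
      have h2 : (σ x - σ 1) * (x - 1) = p.2 := congrArg Prod.snd hfx
      linear_combination (x - 1) * h1 - x * h2 + (x ^ 2 - x) * hD
    -- extract three distinct elements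
    have h3 : 2 < t.card := hp
    obtain ⟨x₁, hx₁⟩ := Finset.card_pos.mp (lt_trans (by norm_num) h3)
    have h3' : 1 < (t.erase x₁).card := by
      rw [Finset.card_erase_of_mem hx₁]; omega
    obtain ⟨x₂, hx₂⟩ := Finset.card_pos.mp (lt_trans (by norm_num) h3')
    have h3'' : 0 < ((t.erase x₁).erase x₂).card := by
      rw [Finset.card_erase_of_mem hx₂, Finset.card_erase_of_mem hx₁]; omega
    obtain ⟨x₃, hx₃⟩ := Finset.card_pos.mp h3''
    rw [Finset.mem_erase] at hx₂
    rw [Finset.mem_erase, Finset.mem_erase] at hx₃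
    obtain ⟨hne21, hx₂t⟩ := hx₂
    obtain ⟨hne32, hne31, hx₃t⟩ := hx₃
    have q1 := hquad x₁ hx₁
    have q2 := hquad x₂ hx₂t
    have q3 := hquad x₃ hx₃t
    have e12 : D * (x₁ + x₂) + (p.2 - p.1 - D) = 0 := by
      have hfac : (x₁ - x₂) * (D * (x₁ + x₂) + (p.2 - p.1 - D)) = 0 := by
        linear_combination q1 - q2
      rcases mul_eq_zero.mp hfac with h | h
      · exact absurd (sub_eq_zero.mp h) (Ne.symm hne21)
      · exact h
    have e13 : D * (x₁ + x₃) + (p.2 - p.1 - D) = 0 := by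
      have hfac : (x₁ - x₃) * (D * (x₁ + x₃) + (p.2 - p.1 - D)) = 0 := by
        linear_combination q1 - q3
      rcases mul_eq_zero.mp hfac with h | h
      · exact absurd (sub_eq_zero.mp h) (Ne.symm hne31)
      · exact h
    have hfin : D * (x₂ - x₃) = 0 := by linear_combination e12 - e13
    rcases mul_eq_zero.mp hfin with h | h
    · exact hDne h
    · exact hne32 (sub_eq_zero.mp h).symm
  -- the main argument
  have hTeq : {σ : F → F | Function.Bijective σ ∧
      ((∀ x y : F, x ≠ y → σ (x + ρ₀ (y - x)) = σ x + ρ₀ (σ y - σ x)) ∨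
       (∀ x y : F, x ≠ y → σ (x + ρ₀ (y - x)) = σ x + ρ₀⁻¹ (σ y - σ x)))}
      = (fun p : F × F => fun x : F => p.1 * x + p.2) '' (H ×ˢ (Set.univ : Set F)) := by
    ext σ
    simp only [Set.mem_setOf_eq, Set.mem_image, Set.mem_prod, Set.mem_univ, and_true]
    constructor
    · rintro ⟨hbij, hOP | hOR⟩
      · have hτbij : Function.Bijective (fun z => σ z - σ 0) :=
          (Equiv.subRight (σ 0)).bijective.comp hbij
        have hτ0 : (fun z => σ z - σ 0) 0 = 0 := sub_self _
        have hτop : ∀ x y : F, x ≠ y → (fun z => σ z - σ 0) (x + ρ₀ (y - x)) =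
            (fun z => σ z - σ 0) x + ρ₀ ((fun z => σ z - σ 0) y - (fun z => σ z - σ 0) x) := by
          intro x y hxy
          simp only []
          have h2 : σ y - σ 0 - (σ x - σ 0) = σ y - σ x := by ring
          rw [h2, hOP x y hxy]
          ring
        rcases classOP _ hτbij hτ0 hτop with ⟨c, hc, hlin⟩ | ⟨c, hc, hrho⟩
        · refine ⟨(c, σ 0), hc, ?_⟩
          funext x
          have h3 : σ x - σ 0 = c * x := hlin x
          show c * x + σ 0 = σ x
          linear_combination -h3
        · exfalso
          apply noodd c hc
          intro x y hxy
          have h1 := hτop x y hxy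
          simp only [hrho] at h1
          exact h1
      · exact absurd hOR (by intro h; exact noOR σ hbij h)
    · rintro ⟨⟨u, v⟩, hu, rfl⟩
      have hu0 : u ≠ 0 := Hne0 _ hu
      refine ⟨?_, Or.inl ?_⟩
      · exact (Equiv.addRight v).bijective.comp (Equiv.mulLeft₀ u hu0).bijective
      · intro x y hxy
        show u * (x + ρ₀ (y - x)) + v = u * x + v + ρ₀ (u * y + v - (u * x + v))
        have hd : u * y + v - (u * x + v) = u * (y - x) := by ring
        rw [hd, rho_scale u hu]
        ring
  rw [hTeq]
  have hinjE : Set.InjOn (fun p : F × F => fun x : F => p.1 * x + p.2)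
      (H ×ˢ (Set.univ : Set F)) := by
    intro p hp q hq h
    have h0 := congrFun h 0
    have h1 := congrFun h 1
    simp only [mul_zero, zero_add, mul_one] at h0 h1
    have hp2 : p.2 = q.2 := h0
    have hp1 : p.1 = q.1 := by
      have := h1
      rw [hp2] at this
      exact add_right_cancel this
    exact Prod.ext hp1 hp2
  rw [Set.ncard_image_of_injOn hinjE]
  have hprod : (H ×ˢ (Set.univ : Set F)).ncard = H.ncard * (Set.univ : Set F).ncard := by
    rw [← Nat.card_coe_set_eq, ← Nat.card_coe_set_eq, ← Nat.card_coe_set_eq,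
      Nat.card_congr (Equiv.Set.prod _ _), Nat.card_prod]
  have hHcard : H.ncard = m * n := by
    have hHset : H = ↑((Finset.range (m * n)).image fun i => (ε * ξ) ^ i) := by
      ext z
      rw [Finset.coe_image, Finset.coe_range]
      constructor
      · intro hz
        obtain ⟨i, rfl⟩ := (hHpow _).mp hz
        exact ⟨i % (m * n), Nat.mod_lt _ (by omega), (hpm _ _ i hεξmn).symm⟩
      · rintro ⟨i, -, rfl⟩
        exact (hHpow _).mpr ⟨i, rfl⟩
    rw [hHset, Set.ncard_coe_finset, Finset.card_image_of_injOn, Finset.card_range]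
    intro i hi j hj hij
    exact hinj i (Finset.mem_range.mp hi) j (Finset.mem_range.mp hj) hij
  have hU : (Set.univ : Set F).ncard = 2 * m * n + 1 := by
    rw [Set.ncard_univ, Nat.card_eq_fintype_card, hcard]
  rw [hprod, hHcard, hU]
  ring
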